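/- In the category of nonempty sets (the full subcategory of the category of types on types satisfying Nonempty, with functions as morphisms), the one-point set PUnit is not a uniformly movable object. -/

import Mathlib

open CategoryTheory

/-- An object `X` of a category is *movable* if there exist an object `M` and a morphism
`m : M ⟶ X` such that every morphism `p : Y ⟶ X` admits `u : M ⟶ Y` with `u ≫ p = m`. -/
def Movable {K : Type*} [Category K] (X : K) : Prop :=
  ∃ (M : K) (m : M ⟶ X), ∀ (Y : K) (p : Y ⟶ X), ∃ u : M ⟶ Y, u ≫ p = m

/-- An object `X` of a category is *uniformly movable* if there exist an object `M`, a morphism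
`m : M ⟶ X`, and an assignment `u` sending each `p : Y ⟶ X` to `u Y p : M ⟶ Y` with
(1) `u Y p ≫ p = m` and (2) `u Y p = u Z q ≫ r` whenever `r ≫ p = q`. -/
def UniformlyMovable {K : Type*} [Category K] (X : K) : Prop :=
  ∃ (M : K) (m : M ⟶ X) (u : ∀ Y : K, (Y ⟶ X) → (M ⟶ Y)),
    (∀ (Y : K) (p : Y ⟶ X), u Y p ≫ p = m) ∧
    (∀ (Y Z : K) (p : Y ⟶ X) (q : Z ⟶ X) (r : Z ⟶ Y), r ≫ p = q → u Y p = u Z q ≫ r)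

/-- In the category of nonempty sets, the one-point set `PUnit` is not uniformly movable. -/
theorem punit_not_uniformlyMovable :
    ¬ UniformlyMovable (⟨PUnit, ⟨PUnit.unit⟩⟩ : ObjectProperty.FullSubcategory fun α : Type => Nonempty α) := by
  rintro ⟨M, m, u, -, h2⟩
  let B : ObjectProperty.FullSubcategory fun α : Type => Nonempty α := ⟨Bool, ⟨true⟩⟩
  let p : B ⟶ (⟨PUnit, ⟨PUnit.unit⟩⟩ : ObjectProperty.FullSubcategory fun α : Type => Nonempty α) :=
    ObjectProperty.homMk (TypeCat.ofHom fun _ => (PUnit.unit : PUnit.{1}))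
  let rt : B ⟶ B := ObjectProperty.homMk (TypeCat.ofHom fun _ => true)
  let rf : B ⟶ B := ObjectProperty.homMk (TypeCat.ofHom fun _ => false)
  have ht := h2 B B p p rt rfl
  have hf := h2 B B p p rf rfl
  obtain ⟨x⟩ := M.property
  have h := (congrArg (fun f : M ⟶ B => InducedCategory.Hom.hom f x) ht).symm.trans (congrArg (fun f : M ⟶ B => InducedCategory.Hom.hom f x) hf)
  simp [ObjectProperty.FullSubcategory.comp_hom, rt, rf, ObjectProperty.homMk, TypeCat.ofHom_apply] at h
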